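/- Every liability game is linearly representable: with players N = {0,1,...,k}, liabilities l_1,...,l_k ∈ ℕ, assets A ∈ ℕ with A < Σ l_i, setting L = Σ l_i + 1, a_0 = L, a_i = l_i for i ≥ 1, and f(x) = min(A, x - L) if x ≥ L and f(x) = max(0, A - (L - 1 - x)) if x < L, one has v(S) = f(Σ_{i∈S} a_i), where v(S) = min(A, Σ_{j∈S\{0}} l_j) if 0 ∈ S and v(S) = max(0, A - Σ_{j∉S∪{0}} l_j) if 0 ∉ S. -/

import Mathlib

open Finset

theorem liability_linearly_representable (k : ℕ) (l : ℕ → ℕ) (A : ℕ)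
    (hA : A < ∑ i ∈ Finset.Icc 1 k, l i)
    (L : ℕ) (hL : L = (∑ i ∈ Finset.Icc 1 k, l i) + 1)
    (a : ℕ → ℕ) (ha0 : a 0 = L) (ha : ∀ i, 1 ≤ i → a i = l i)
    (f : ℕ → ℤ)
    (hf : ∀ x : ℕ, f x = if L ≤ x then min (A : ℤ) ((x : ℤ) - (L : ℤ))
      else max 0 ((A : ℤ) - ((L : ℤ) - 1 - (x : ℤ))))
    (v : Finset ℕ → ℤ)
    (hv : ∀ S ⊆ Finset.range (k + 1),
      v S = if 0 ∈ S then min (A : ℤ) (∑ j ∈ S.erase 0, (l j : ℤ))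
        else max 0 ((A : ℤ) - ∑ j ∈ (Finset.range (k + 1) \ S).erase 0, (l j : ℤ))) :
    ∀ S ⊆ Finset.range (k + 1), v S = f (∑ i ∈ S, a i) := by
  intro S hS
  have hIcc : Finset.Icc 1 k = (Finset.range (k+1)).erase 0 := by
    ext x
    simp [Finset.mem_Icc, Nat.lt_succ_iff, Nat.one_le_iff_ne_zero, and_comm]
  rw [hv S hS, hf]
  by_cases h0 : 0 ∈ S
  · have hsum : ∑ i ∈ S, a i = L + ∑ j ∈ S.erase 0, l j := by
      rw [← Finset.add_sum_erase _ a h0, ha0]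
      congr 1
      exact Finset.sum_congr rfl fun j hj =>
        ha j (Nat.one_le_iff_ne_zero.mpr (Finset.ne_of_mem_erase hj))
    rw [hsum, if_pos (Nat.le_add_right _ _), if_pos h0]
    push_cast
    ring_nf
  · have hSsub : S ⊆ Finset.Icc 1 k := by
      rw [hIcc]
      intro x hx
      exact Finset.mem_erase.mpr ⟨fun h => h0 (h ▸ hx), hS hx⟩
    have hsum : ∑ i ∈ S, a i = ∑ j ∈ S, l j := by
      exact Finset.sum_congr rfl fun j hj => ha j (Finset.mem_Icc.mp (hSsub hj)).1
    have hsplit : ∑ j ∈ S, l j + ∑ j ∈ Finset.Icc 1 k \ S, l j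
        = ∑ i ∈ Finset.Icc 1 k, l i := by
      rw [add_comm]
      exact Finset.sum_sdiff hSsub
    have hlt : ∑ i ∈ S, a i < L := by
      rw [hsum, hL]
      omega
    have hset : (Finset.range (k + 1) \ S).erase 0 = Finset.Icc 1 k \ S := by
      rw [hIcc]
      ext x
      simp only [Finset.mem_erase, Finset.mem_sdiff]
      tauto
    rw [if_neg (Nat.not_le.mpr hlt), if_neg h0, hset, hsum]
    have hsplit' : (∑ j ∈ S, (l j : ℤ)) + ∑ j ∈ Finset.Icc 1 k \ S, (l j : ℤ)
        = ((L : ℤ) - 1) := by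
      push_cast [← hsplit, hL]
      ring
    push_cast
    have h2 : ∑ j ∈ Finset.Icc 1 k \ S, (l j : ℤ) = (L : ℤ) - 1 - ∑ j ∈ S, (l j : ℤ) := by
      linarith
    rw [h2]
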